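/- Let Z and K be compact Hausdorff spaces with K zero-dimensional (dim K = 0). Then the set of continuous maps g : Z × K → [0,1] such that g({z} × K) is a finite set for every z ∈ Z is dense in C(Z × K, [0,1]) with the uniform convergence topology. -/
import Mathlib


open Set Metric

noncomputable section

/-- Covering dimension of a topological space is at most `n`: every open cover admits an
open refinement covering the space in which every point lies in at most `n+1` members. -/
def coveringDimLE (X : Type*) [TopologicalSpace X] (n : ℕ) : Prop :=
  ∀ U : Set (Set X), (∀ u ∈ U, IsOpen u) → ⋃₀ U = Set.univ →
    ∃ V : Set (Set X), (∀ v ∈ V, IsOpen v) ∧ ⋃₀ V = Set.univ ∧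
      (∀ v ∈ V, ∃ u ∈ U, v ⊆ u) ∧
      ∀ x : X, {v | v ∈ V ∧ x ∈ v}.Finite ∧ {v | v ∈ V ∧ x ∈ v}.ncard ≤ n + 1

/-- The cube `I^n` with the Euclidean metric. -/
def Cube (n : ℕ) := {x : EuclideanSpace ℝ (Fin n) // ∀ i, x i ∈ Set.Icc (0:ℝ) 1}

noncomputable instance (n : ℕ) : MetricSpace (Cube n) :=
  inferInstanceAs (MetricSpace {x : EuclideanSpace ℝ (Fin n) // ∀ i, x i ∈ Set.Icc (0:ℝ) 1})

/-- A perfect map: continuous, closed, with compact fibers. -/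
def IsPerfectMap {X Y : Type*} [TopologicalSpace X] [TopologicalSpace Y] (f : X → Y) : Prop :=
  Continuous f ∧ IsClosedMap f ∧ ∀ y : Y, IsCompact (f ⁻¹' {y})

/-- Openness in the source limitation (fine) topology on `C(X, K)`. -/
def SLOpen {X K : Type*} [TopologicalSpace X] [MetricSpace K] (U : Set C(X, K)) : Prop :=
  ∀ g ∈ U, ∃ α : C(X, ℝ), (∀ x, 0 < α x) ∧
    {h : C(X, K) | ∀ x, dist (h x) (g x) ≤ α x} ⊆ U

/-- Density in the source limitation (fine) topology on `C(X, K)`. -/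
def SLDense {X K : Type*} [TopologicalSpace X] [MetricSpace K] (H : Set C(X, K)) : Prop :=
  ∀ g : C(X, K), ∀ α : C(X, ℝ), (∀ x, 0 < α x) →
    ∃ h ∈ H, ∀ x, dist (h x) (g x) ≤ α x

/-- A `C`-space: for every sequence of open covers there is a sequence of pairwise disjoint
open families, the `k`-th refining the `k`-th cover, whose union covers the space. -/
def IsCSpace (Y : Type*) [TopologicalSpace Y] : Prop :=
  ∀ ω : ℕ → Set (Set Y), (∀ k, (∀ u ∈ ω k, IsOpen u) ∧ ⋃₀ ω k = Set.univ) →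
    ∃ γ : ℕ → Set (Set Y),
      (∀ k, (∀ v ∈ γ k, IsOpen v) ∧ (∀ v ∈ γ k, ∃ u ∈ ω k, v ⊆ u) ∧
        (γ k).Pairwise (Disjoint : Set Y → Set Y → Prop)) ∧
      ⋃₀ (⋃ k, γ k) = Set.univ

theorem stmt5 {Z K : Type*} [TopologicalSpace Z] [CompactSpace Z] [T2Space Z]
    [TopologicalSpace K] [CompactSpace K] [T2Space K]
    (hK : coveringDimLE K 0) :
    Dense {g : C(Z × K, unitInterval) |
      ∀ z : Z, (Set.range fun k : K => g (z, k)).Finite} := by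
  rcases isEmpty_or_nonempty K with hKe | hKn
  · have : {g : C(Z × K, unitInterval) |
        ∀ z : Z, (Set.range fun k : K => g (z, k)).Finite} = Set.univ := by
      ext g; simp only [Set.mem_setOf_eq, Set.mem_univ, iff_true]
      intro z
      have : (Set.range fun k : K => g (z, k)) = ∅ := Set.range_eq_empty _
      rw [this]; exact Set.finite_empty
    rw [this]; exact dense_univ
  rw [Metric.dense_iff]
  intro g r hr
  set ε := r / 2 with hε
  have hεpos : 0 < ε := by positivity
  -- the basic open cover of K
  set u : K → Set K := fun k₀ => {k | ∀ z, dist (g (z, k)) (g (z, k₀)) < ε} with hu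
  have hu_open : ∀ k₀, IsOpen (u k₀) := by
    intro k₀
    have hcl : IsClosed {p : Z × K | ε ≤ dist (g p) (g (p.1, k₀))} := by
      apply isClosed_le continuous_const
      exact (continuous_dist.comp ((map_continuous g).prodMk
        ((map_continuous g).comp (continuous_fst.prodMk continuous_const))))
    have : (u k₀)ᶜ = Prod.snd '' {p : Z × K | ε ≤ dist (g p) (g (p.1, k₀))} := by
      ext k
      simp only [Set.mem_compl_iff, Set.mem_image, Set.mem_setOf_eq, hu, not_forall, not_lt]
      constructor
      · rintro ⟨z, hz⟩; exact ⟨(z, k), hz, rfl⟩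
      · rintro ⟨⟨z, k'⟩, hp, rfl⟩; exact ⟨z, hp⟩
    rw [← isClosed_compl_iff, this]
    exact isClosedMap_snd_of_compactSpace _ hcl
  have hu_mem : ∀ k₀, k₀ ∈ u k₀ := fun k₀ z => by simpa using hεpos
  obtain ⟨V, hVopen, hVcov, hVref, hVmul⟩ := hK (Set.range u)
    (by rintro _ ⟨k₀, rfl⟩; exact hu_open k₀)
    (by apply Set.eq_univ_of_forall; intro k; exact ⟨u k, ⟨k, rfl⟩, hu_mem k⟩)
  -- for each k a unique member of V containing it
  have hex : ∀ k : K, ∃ w, w ∈ V ∧ k ∈ w := by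
    intro k
    have : k ∈ ⋃₀ V := hVcov ▸ Set.mem_univ k
    exact this
  choose v hvV hkv using hex
  have huniq : ∀ k : K, ∀ w ∈ V, k ∈ w → w = v k := by
    intro k w hw hkw
    have hfin := (hVmul k).1
    have hle : {w | w ∈ V ∧ k ∈ w}.ncard ≤ 1 := (hVmul k).2
    exact (Set.ncard_le_one_iff hfin).1 hle ⟨hw, hkw⟩ ⟨hvV k, hkv k⟩
  -- choice of a point in each nonempty member
  classical
  set c : Set K → K := fun w => if h : w.Nonempty then h.some else Classical.arbitrary K with hc
  set f : K → K := fun k => c (v k) with hf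
  have hfv : ∀ k, f k ∈ v k := by
    intro k
    have hne : (v k).Nonempty := ⟨k, hkv k⟩
    simp only [hf, hc, dif_pos hne]
    exact hne.some_mem
  have hflc : IsLocallyConstant f := by
    rw [IsLocallyConstant.iff_exists_open]
    intro k
    refine ⟨v k, hVopen _ (hvV k), hkv k, ?_⟩
    intro k' hk'
    have : v k = v k' := huniq k' (v k) (hvV k) hk'
    simp only [hf, this]
  have hfc : Continuous f := hflc.continuous
  -- finiteness of the range of f
  have hrf : (Set.range f).Finite := by
    obtain ⟨t, ht⟩ := isCompact_univ.elim_finite_subcover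
      (fun w : V => (w : Set K)) (fun w => hVopen _ w.2)
      (by intro k _; exact Set.mem_iUnion.2 ⟨⟨v k, hvV k⟩, hkv k⟩)
    have hsub : Set.range f ⊆ (fun w : V => c (w : Set K)) '' ↑t := by
      rintro _ ⟨k, rfl⟩
      have : k ∈ ⋃ w ∈ t, (w : Set K) := ht (Set.mem_univ k)
      simp only [Set.mem_iUnion] at this
      obtain ⟨w, hwt, hkw⟩ := this
      have hwv : (w : Set K) = v k := huniq k w w.2 hkw
      exact ⟨w, hwt, by simp [hf, hwv]⟩
    exact (t.finite_toSet.image _).subset hsub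
  -- the approximating map
  set h : C(Z × K, unitInterval) :=
    ⟨fun p => g (p.1, f p.2),
      (map_continuous g).comp (continuous_fst.prodMk (hfc.comp continuous_snd))⟩ with hh
  refine ⟨h, Metric.mem_ball.2 ?_, ?_⟩
  · rw [ContinuousMap.dist_lt_iff hr]
    rintro ⟨z, k⟩
    obtain ⟨_, ⟨k₀, rfl⟩, hvu⟩ := hVref (v k) (hvV k)
    have h1 : dist (g (z, f k)) (g (z, k₀)) < ε := hvu (hfv k) z
    have h2 : dist (g (z, k)) (g (z, k₀)) < ε := hvu (hkv k) z
    calc dist (h (z, k)) (g (z, k)) ≤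
        dist (g (z, f k)) (g (z, k₀)) + dist (g (z, k₀)) (g (z, k)) := dist_triangle _ _ _
      _ < ε + ε := by rw [dist_comm (g (z, k₀))]; exact add_lt_add h1 h2
      _ = r := by rw [hε]; ring
  · intro z
    have : (Set.range fun k : K => h (z, k)) ⊆ (fun k' => g (z, k')) '' Set.range f := by
      rintro _ ⟨k, rfl⟩
      exact ⟨f k, ⟨k, rfl⟩, rfl⟩
    exact ((hrf.image _).subset this)
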